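/- arXiv:math/0609161 — 3 statements merged into one kernel-verified Lean document; each statement's English description precedes it below -/
import Mathlib

section
/- Let α > 0 and L₀ := −∂_z² + (α²/4) z² − (5/2)α on L²(ℝ). Then for every bounded function g and every r > 0, ‖⟨z⟩^{−2} e^{α z²/4} e^{−r L₀} g‖_∞ ≤ 2(1/α + 1) e^{2αr} ‖⟨z⟩^{−2} e^{α z²/4} g‖_∞, where ⟨z⟩ := (1 + z²)^{1/2}. -/
open MeasureTheory Real Filter Asymptotics Topology

/-- The integral kernel of `e^{-r L₀}` for
`L₀ = -∂_z² + (α²/4) z² - (5/2)α`: the Mehler kernel of the harmonic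
oscillator times `e^{(5α/2) r}`. -/
noncomputable def heatKernelL0 (α r x y : ℝ) : ℝ :=
  Real.exp (5 * α / 2 * r) * Real.sqrt (α / (4 * Real.pi * Real.sinh (α * r))) *
    Real.exp (-(α * ((x ^ 2 + y ^ 2) * Real.cosh (α * r) - 2 * x * y)) /
      (4 * Real.sinh (α * r)))

lemma integrable_sq_mul_gauss {b : ℝ} (hb : 0 < b) :
    Integrable fun x : ℝ => x ^ 2 * Real.exp (-b * x ^ 2) := by
  have h := integrable_rpow_mul_exp_neg_mul_sq hb (s := 2) (by norm_num)
  have he : (fun x : ℝ => x ^ (2:ℝ) * Real.exp (-b * x ^ 2))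
      = fun x : ℝ => x ^ 2 * Real.exp (-b * x ^ 2) := by
    funext x
    rw [show (2:ℝ) = ((2:ℕ):ℝ) by norm_num, Real.rpow_natCast]
  rwa [he] at h

lemma tendsto_mul_gauss_atTop {b : ℝ} (hb : 0 < b) :
    Tendsto (fun x : ℝ => x * Real.exp (-b * x ^ 2)) atTop (𝓝 0) := by
  have h := rpow_mul_exp_neg_mul_sq_isLittleO_exp_neg hb 1
  have h2 : Tendsto (fun x : ℝ => Real.exp (-(1/2) * x)) atTop (𝓝 0) := by
    have hlin : Tendsto (fun x : ℝ => -(1/2) * x) atTop atBot :=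
      (tendsto_const_mul_atBot_of_neg (by norm_num)).2 tendsto_id
    exact Real.tendsto_exp_atBot.comp hlin
  have h3 := h.tendsto_zero_of_tendsto h2
  refine h3.congr (fun x => ?_)
  rw [Real.rpow_one]

lemma tendsto_mul_gauss_atBot {b : ℝ} (hb : 0 < b) :
    Tendsto (fun x : ℝ => x * Real.exp (-b * x ^ 2)) atBot (𝓝 0) := by
  have h : Tendsto (fun x : ℝ => -((-x) * Real.exp (-b * (-x) ^ 2))) atBot (𝓝 (-0)) :=
    ((tendsto_mul_gauss_atTop hb).comp tendsto_neg_atBot_atTop).neg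
  rw [neg_zero] at h
  refine h.congr fun x => ?_
  rw [neg_sq]; ring

lemma tendsto_gauss_atTop {b : ℝ} (hb : 0 < b) :
    Tendsto (fun x : ℝ => Real.exp (-b * x ^ 2)) atTop (𝓝 0) := by
  have hlin : Tendsto (fun x : ℝ => -b * x ^ 2) atTop atBot :=
    (tendsto_const_mul_atBot_of_neg (by linarith)).2 (tendsto_pow_atTop (by norm_num))
  exact Real.tendsto_exp_atBot.comp hlin

lemma tendsto_gauss_atBot {b : ℝ} (hb : 0 < b) :
    Tendsto (fun x : ℝ => Real.exp (-b * x ^ 2)) atBot (𝓝 0) := by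
  have h : Tendsto (fun x : ℝ => Real.exp (-b * (-x) ^ 2)) atBot (𝓝 0) :=
    (tendsto_gauss_atTop hb).comp tendsto_neg_atBot_atTop
  refine h.congr fun x => ?_
  rw [neg_sq]

lemma integral_sq_mul_gauss {b : ℝ} (hb : 0 < b) :
    ∫ x : ℝ, x ^ 2 * Real.exp (-b * x ^ 2) = Real.sqrt (Real.pi / b) / (2 * b) := by
  have hb2 : (2 * b) ≠ 0 := by positivity
  have hint1 : Integrable fun x : ℝ => Real.exp (-b * x ^ 2) := integrable_exp_neg_mul_sq hb
  have hint2 := integrable_sq_mul_gauss hb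
  have hderiv : ∀ x : ℝ, HasDerivAt (fun x : ℝ => -(2*b)⁻¹ * (x * Real.exp (-b * x ^ 2)))
      (x ^ 2 * Real.exp (-b * x ^ 2) - (2*b)⁻¹ * Real.exp (-b * x ^ 2)) x := by
    intro x
    have h1 : HasDerivAt (fun x : ℝ => -b * x ^ 2) (-b * (2 * x)) x := by
      simpa using (hasDerivAt_pow 2 x).const_mul (-b)
    have h2 := h1.exp
    have h3 := (hasDerivAt_id x).mul h2
    have h4 := h3.const_mul (-(2*b)⁻¹)
    refine h4.congr_deriv ?_
    simp only [id]
    have hinv : (2*b)⁻¹ * (2*b) = 1 := inv_mul_cancel₀ hb2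
    linear_combination (x ^ 2 * Real.exp (-b * x ^ 2)) * hinv
  have hbot : Tendsto (fun x : ℝ => -(2*b)⁻¹ * (x * Real.exp (-b * x ^ 2))) atBot (𝓝 0) := by
    simpa using (tendsto_mul_gauss_atBot hb).const_mul (-(2*b)⁻¹)
  have htop : Tendsto (fun x : ℝ => -(2*b)⁻¹ * (x * Real.exp (-b * x ^ 2))) atTop (𝓝 0) := by
    simpa using (tendsto_mul_gauss_atTop hb).const_mul (-(2*b)⁻¹)
  have key := integral_of_hasDerivAt_of_tendsto hderiv
    (hint2.sub (hint1.const_mul _)) hbot htop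
  rw [integral_sub hint2 (hint1.const_mul _), integral_const_mul, integral_gaussian] at key
  have : (∫ x : ℝ, x ^ 2 * Real.exp (-b * x ^ 2)) = (2*b)⁻¹ * Real.sqrt (Real.pi / b) := by
    linarith [key]
  rw [this]; ring

lemma integral_mul_gauss {b : ℝ} (hb : 0 < b) :
    ∫ x : ℝ, x * Real.exp (-b * x ^ 2) = 0 := by
  have hderiv : ∀ x : ℝ, HasDerivAt (fun x : ℝ => -(2*b)⁻¹ * Real.exp (-b * x ^ 2))
      (x * Real.exp (-b * x ^ 2)) x := by
    intro x
    have h1 : HasDerivAt (fun x : ℝ => -b * x ^ 2) (-b * (2 * x)) x := by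
      simpa using (hasDerivAt_pow 2 x).const_mul (-b)
    have h2 := h1.exp.const_mul (-(2*b)⁻¹)
    refine h2.congr_deriv ?_
    have hinv : (2*b)⁻¹ * (2*b) = 1 := inv_mul_cancel₀ (by positivity)
    linear_combination (x * Real.exp (-b * x ^ 2)) * hinv
  have hbot : Tendsto (fun x : ℝ => -(2*b)⁻¹ * Real.exp (-b * x ^ 2)) atBot (𝓝 0) := by
    simpa using (tendsto_gauss_atBot hb).const_mul (-(2*b)⁻¹)
  have htop : Tendsto (fun x : ℝ => -(2*b)⁻¹ * Real.exp (-b * x ^ 2)) atTop (𝓝 0) := by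
    simpa using (tendsto_gauss_atTop hb).const_mul (-(2*b)⁻¹)
  have key := integral_of_hasDerivAt_of_tendsto hderiv
    (integrable_mul_exp_neg_mul_sq hb) hbot htop
  simpa using key

lemma integrable_shifted_gauss {b : ℝ} (hb : 0 < b) (m : ℝ) :
    Integrable fun y : ℝ => (1 + y ^ 2) * Real.exp (-b * (y - m) ^ 2) := by
  have hin : Integrable fun u : ℝ => (1 + (u + m) ^ 2) * Real.exp (-b * u ^ 2) := by
    have : (fun u : ℝ => (1 + (u + m) ^ 2) * Real.exp (-b * u ^ 2))
        = fun u : ℝ => (1 + m ^ 2) * Real.exp (-b * u ^ 2)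
          + (2 * m) * (u * Real.exp (-b * u ^ 2)) + u ^ 2 * Real.exp (-b * u ^ 2) := by
      funext u; ring
    rw [this]
    exact (((integrable_exp_neg_mul_sq hb).const_mul _).add
      ((integrable_mul_exp_neg_mul_sq hb).const_mul _)).add (integrable_sq_mul_gauss hb)
  have := hin.comp_sub_right m
  refine this.congr (Eventually.of_forall fun y => ?_)
  ring_nf

lemma integral_shifted_gauss {b : ℝ} (hb : 0 < b) (m : ℝ) :
    ∫ y : ℝ, (1 + y ^ 2) * Real.exp (-b * (y - m) ^ 2)
      = (1 + m ^ 2 + (2 * b)⁻¹) * Real.sqrt (Real.pi / b) := by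
  have h1 : (fun y : ℝ => (1 + y ^ 2) * Real.exp (-b * (y - m) ^ 2))
      = fun y : ℝ => (fun u : ℝ => (1 + (u + m) ^ 2) * Real.exp (-b * u ^ 2)) (y - m) := by
    funext y; ring_nf
  rw [h1, integral_sub_right_eq_self (fun u : ℝ => (1 + (u + m) ^ 2) * Real.exp (-b * u ^ 2)) m]
  have h2 : (fun u : ℝ => (1 + (u + m) ^ 2) * Real.exp (-b * u ^ 2))
      = fun u : ℝ => ((1 + m ^ 2) * Real.exp (-b * u ^ 2)
          + (2 * m) * (u * Real.exp (-b * u ^ 2))) + u ^ 2 * Real.exp (-b * u ^ 2) := by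
    funext u; ring
  have i1 : Integrable fun u : ℝ => (1 + m ^ 2) * Real.exp (-b * u ^ 2) :=
    (integrable_exp_neg_mul_sq hb).const_mul _
  have i2 : Integrable fun u : ℝ => (2 * m) * (u * Real.exp (-b * u ^ 2)) :=
    (integrable_mul_exp_neg_mul_sq hb).const_mul _
  have i12 : Integrable fun u : ℝ => (1 + m ^ 2) * Real.exp (-b * u ^ 2)
      + (2 * m) * (u * Real.exp (-b * u ^ 2)) := i1.add i2
  rw [h2, integral_add i12 (integrable_sq_mul_gauss hb), integral_add i1 i2,
    integral_const_mul, integral_const_mul, integral_gaussian, integral_mul_gauss hb,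
    integral_sq_mul_gauss hb]
  field_simp
  ring

set_option maxHeartbeats 2000000 in
/-- the weighted `L^∞` bound
`‖⟨z⟩^{-2} e^{αz²/4} e^{-rL₀} g‖_∞ ≤ 2(1/α + 1) e^{2αr} ‖⟨z⟩^{-2} e^{αz²/4} g‖_∞`,
stated pointwise with `M` a bound for the weighted norm of `g` and
`⟨z⟩² = 1 + z²`. -/
theorem weighted_semigroup_bound (α r M : ℝ) (hα : 0 < α) (hr : 0 < r)
    (g : ℝ → ℝ)
    (hg : ∀ z : ℝ, |g z| * Real.exp (α * z ^ 2 / 4) ≤ M * (1 + z ^ 2)) :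
    ∀ x : ℝ, |∫ y : ℝ, heatKernelL0 α r x y * g y| * Real.exp (α * x ^ 2 / 4) ≤
      2 * (1 / α + 1) * Real.exp (2 * α * r) * M * (1 + x ^ 2) := by
  intro x
  have hM : 0 ≤ M := by
    have h0 := hg 0
    simp at h0
    exact le_trans (abs_nonneg _) h0
  have hαr : 0 < α * r := by positivity
  have hs : 0 < Real.sinh (α * r) := Real.sinh_pos_iff.2 hαr
  have hRHS : 0 ≤ 2 * (1 / α + 1) * Real.exp (2 * α * r) * M * (1 + x ^ 2) := by
    have h1 : (0:ℝ) ≤ 2 * (1 / α + 1) := by positivity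
    have h2 : (0:ℝ) ≤ 1 + x ^ 2 := by positivity
    have h3 := Real.exp_pos (2 * α * r)
    exact mul_nonneg (mul_nonneg (mul_nonneg h1 h3.le) hM) h2
  set E1 : ℝ := Real.exp (α * r) with hE1
  have hE1pos : 0 < E1 := Real.exp_pos _
  have hE1one : 1 ≤ E1 := Real.one_le_exp (le_of_lt hαr)
  set β : ℝ := α * E1 / (4 * Real.sinh (α * r)) with hβ
  have hβpos : 0 < β := by positivity
  set m : ℝ := x / E1 with hm
  -- facts about cosh and sinh
  have hcosh : Real.cosh (α * r) = (E1 + E1⁻¹) / 2 := by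
    rw [Real.cosh_eq, hE1, ← Real.exp_neg]
  have hsinh : Real.sinh (α * r) = (E1 - E1⁻¹) / 2 := by
    rw [Real.sinh_eq, hE1, ← Real.exp_neg]
  have hsinh' : Real.sinh (α * r) ≠ 0 := ne_of_gt hs
  have hE1gt : 1 < E1 := by rw [hE1, ← Real.exp_zero]; exact Real.exp_lt_exp.2 hαr
  have hE1ne : E1 ≠ 0 := ne_of_gt hE1pos
  have hne2 : E1 ^ 2 - 1 ≠ 0 := by nlinarith
  have hcosh2 : Real.cosh (α * r) = (E1 ^ 2 + 1) / (2 * E1) := by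
    rw [hcosh]; field_simp
  have hsinh2 : Real.sinh (α * r) = (E1 ^ 2 - 1) / (2 * E1) := by
    rw [hsinh]; field_simp
  -- pointwise kernel identity
  have hker : ∀ y : ℝ,
      heatKernelL0 α r x y * ((1 + y ^ 2) * Real.exp (-(α * y ^ 2 / 4)))
      = (Real.exp (2 * α * r) * Real.sqrt (β / Real.pi)) *
          (Real.exp (-(α * x ^ 2 / 4)) * ((1 + y ^ 2) * Real.exp (-β * (y - m) ^ 2))) := by
    intro y
    unfold heatKernelL0
    have hexp : Real.exp (-(α * ((x ^ 2 + y ^ 2) * Real.cosh (α * r) - 2 * x * y)) /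
          (4 * Real.sinh (α * r))) * Real.exp (-(α * y ^ 2 / 4))
        = Real.exp (-(α * x ^ 2 / 4)) * Real.exp (-β * (y - m) ^ 2) := by
      rw [← Real.exp_add, ← Real.exp_add]
      congr 1
      rw [hβ, hm, hcosh2, hsinh2]
      field_simp
      ring
    have hconst : Real.exp (5 * α / 2 * r) * Real.sqrt (α / (4 * Real.pi * Real.sinh (α * r)))
        = Real.exp (2 * α * r) * Real.sqrt (β / Real.pi) := by
      have hsq : α / (4 * Real.pi * Real.sinh (α * r)) = E1⁻¹ * (β / Real.pi) := by
        rw [hβ, hsinh2]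
        field_simp
      have h1 : Real.sqrt E1⁻¹ = Real.exp (-(α * r) / 2) := by
        rw [hE1, ← Real.exp_neg, ← Real.exp_half]
      have harg : 5 * α / 2 * r + -(α * r) / 2 = 2 * α * r := by ring
      rw [hsq, Real.sqrt_mul (by positivity) _, h1, ← mul_assoc, ← Real.exp_add, harg]
    calc Real.exp (5 * α / 2 * r) * Real.sqrt (α / (4 * Real.pi * Real.sinh (α * r))) *
          Real.exp (-(α * ((x ^ 2 + y ^ 2) * Real.cosh (α * r) - 2 * x * y)) /
            (4 * Real.sinh (α * r))) * ((1 + y ^ 2) * Real.exp (-(α * y ^ 2 / 4)))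
        = (Real.exp (5 * α / 2 * r) * Real.sqrt (α / (4 * Real.pi * Real.sinh (α * r)))) *
          ((Real.exp (-(α * ((x ^ 2 + y ^ 2) * Real.cosh (α * r) - 2 * x * y)) /
            (4 * Real.sinh (α * r))) * Real.exp (-(α * y ^ 2 / 4))) * (1 + y ^ 2)) := by ring
      _ = (Real.exp (2 * α * r) * Real.sqrt (β / Real.pi)) *
          ((Real.exp (-(α * x ^ 2 / 4)) * Real.exp (-β * (y - m) ^ 2)) * (1 + y ^ 2)) := by
        rw [hexp, hconst]
      _ = (Real.exp (2 * α * r) * Real.sqrt (β / Real.pi)) *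
          (Real.exp (-(α * x ^ 2 / 4)) * ((1 + y ^ 2) * Real.exp (-β * (y - m) ^ 2))) := by ring
  -- kernel nonnegativity
  have hK : ∀ y : ℝ, 0 ≤ heatKernelL0 α r x y := by
    intro y
    unfold heatKernelL0
    positivity
  -- the dominating function and its integral
  set A : ℝ := Real.exp (2 * α * r) * Real.sqrt (β / Real.pi) with hA
  have hdom_eq : (fun y : ℝ => heatKernelL0 α r x y * (M * ((1 + y ^ 2) * Real.exp (-(α * y ^ 2 / 4)))))
      = fun y : ℝ => (M * A * Real.exp (-(α * x ^ 2 / 4))) *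
          ((1 + y ^ 2) * Real.exp (-β * (y - m) ^ 2)) := by
    funext y
    have := hker y
    calc heatKernelL0 α r x y * (M * ((1 + y ^ 2) * Real.exp (-(α * y ^ 2 / 4))))
        = M * (heatKernelL0 α r x y * ((1 + y ^ 2) * Real.exp (-(α * y ^ 2 / 4)))) := by ring
      _ = M * (A * (Real.exp (-(α * x ^ 2 / 4)) * ((1 + y ^ 2) * Real.exp (-β * (y - m) ^ 2)))) := by
          rw [this]
      _ = (M * A * Real.exp (-(α * x ^ 2 / 4))) * ((1 + y ^ 2) * Real.exp (-β * (y - m) ^ 2)) := by ring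
  have hdom_int : Integrable (fun y : ℝ =>
      heatKernelL0 α r x y * (M * ((1 + y ^ 2) * Real.exp (-(α * y ^ 2 / 4))))) := by
    rw [hdom_eq]
    exact (integrable_shifted_gauss hβpos m).const_mul _
  have hdom_val : (∫ y : ℝ, heatKernelL0 α r x y * (M * ((1 + y ^ 2) * Real.exp (-(α * y ^ 2 / 4)))))
      = M * Real.exp (2 * α * r) * Real.exp (-(α * x ^ 2 / 4)) * (1 + m ^ 2 + (2 * β)⁻¹) := by
    rw [hdom_eq, integral_const_mul, integral_shifted_gauss hβpos m, hA]
    have hsqrt : Real.sqrt (β / Real.pi) * Real.sqrt (Real.pi / β) = 1 := by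
      rw [← Real.sqrt_mul (by positivity)]
      rw [show β / Real.pi * (Real.pi / β) = 1 by
        field_simp]
      exact Real.sqrt_one
    calc M * (Real.exp (2 * α * r) * Real.sqrt (β / Real.pi)) * Real.exp (-(α * x ^ 2 / 4)) *
          ((1 + m ^ 2 + (2 * β)⁻¹) * Real.sqrt (Real.pi / β))
        = (Real.sqrt (β / Real.pi) * Real.sqrt (Real.pi / β)) *
          (M * Real.exp (2 * α * r) * Real.exp (-(α * x ^ 2 / 4)) * (1 + m ^ 2 + (2 * β)⁻¹)) := by
          ring
      _ = M * Real.exp (2 * α * r) * Real.exp (-(α * x ^ 2 / 4)) * (1 + m ^ 2 + (2 * β)⁻¹) := by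
          rw [hsqrt, one_mul]
  -- bound on |g|
  have hgbound : ∀ y : ℝ, |g y| ≤ M * ((1 + y ^ 2) * Real.exp (-(α * y ^ 2 / 4))) := by
    intro y
    have h := hg y
    have hepos := Real.exp_pos (α * y ^ 2 / 4)
    rw [Real.exp_neg]
    rw [show M * ((1 + y ^ 2) * (Real.exp (α * y ^ 2 / 4))⁻¹)
        = M * (1 + y ^ 2) / Real.exp (α * y ^ 2 / 4) by ring]
    rw [le_div_iff₀ hepos]
    exact h
  -- final bound on the weighted quantity
  have hfinal : M * Real.exp (2 * α * r) * (1 + m ^ 2 + (2 * β)⁻¹)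
      ≤ 2 * (1 / α + 1) * Real.exp (2 * α * r) * M * (1 + x ^ 2) := by
    have hm2 : m ^ 2 ≤ x ^ 2 := by
      rw [hm, div_pow]
      have : 1 ≤ E1 ^ 2 := by nlinarith
      calc x ^ 2 / E1 ^ 2 ≤ x ^ 2 / 1 := by
            apply div_le_div_of_nonneg_left (by positivity) (by norm_num) this
        _ = x ^ 2 := by norm_num
    have hβinv : (2 * β)⁻¹ ≤ 1 / α := by
      rw [hβ]
      rw [show (2 * (α * E1 / (4 * Real.sinh (α * r))))⁻¹
          = 2 * Real.sinh (α * r) / (α * E1) by field_simp; ring]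
      rw [div_le_div_iff₀ (by positivity) hα]
      have h2s : 2 * Real.sinh (α * r) ≤ E1 := by
        rw [hsinh]
        have : 0 < E1⁻¹ := by positivity
        linarith
      calc 2 * Real.sinh (α * r) * α ≤ E1 * α := by nlinarith
        _ = 1 * (α * E1) := by ring
    have hepos := Real.exp_pos (2 * α * r)
    have h1 : 1 + m ^ 2 + (2 * β)⁻¹ ≤ (1 + 1/α) + x ^ 2 := by linarith
    have h2 : (1 + 1/α) + x ^ 2 ≤ 2 * (1 / α + 1) * (1 + x ^ 2) := by
      have : 0 < 1/α := by positivity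
      nlinarith
    calc M * Real.exp (2 * α * r) * (1 + m ^ 2 + (2 * β)⁻¹)
        ≤ M * Real.exp (2 * α * r) * (2 * (1 / α + 1) * (1 + x ^ 2)) := by
          apply mul_le_mul_of_nonneg_left (le_trans h1 h2) (by positivity)
      _ = 2 * (1 / α + 1) * Real.exp (2 * α * r) * M * (1 + x ^ 2) := by ring
  by_cases hInt : Integrable fun y : ℝ => heatKernelL0 α r x y * g y
  · have step1 : |∫ y : ℝ, heatKernelL0 α r x y * g y|
        ≤ ∫ y : ℝ, heatKernelL0 α r x y * (M * ((1 + y ^ 2) * Real.exp (-(α * y ^ 2 / 4)))) := by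
      calc |∫ y : ℝ, heatKernelL0 α r x y * g y| ≤ ∫ y : ℝ, |heatKernelL0 α r x y * g y| := by
            have hn := norm_integral_le_integral_norm (μ := volume)
              (f := fun y : ℝ => heatKernelL0 α r x y * g y)
            simp only [Real.norm_eq_abs] at hn
            exact hn
        _ ≤ ∫ y : ℝ, heatKernelL0 α r x y * (M * ((1 + y ^ 2) * Real.exp (-(α * y ^ 2 / 4)))) := by
            refine integral_mono hInt.abs hdom_int fun y => ?_
            show |heatKernelL0 α r x y * g y|
              ≤ heatKernelL0 α r x y * (M * ((1 + y ^ 2) * Real.exp (-(α * y ^ 2 / 4))))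
            rw [abs_mul, abs_of_nonneg (hK y)]
            exact mul_le_mul_of_nonneg_left (hgbound y) (hK y)
    rw [hdom_val] at step1
    have hexpx := Real.exp_pos (α * x ^ 2 / 4)
    have step2 : |∫ y : ℝ, heatKernelL0 α r x y * g y| * Real.exp (α * x ^ 2 / 4)
        ≤ M * Real.exp (2 * α * r) * (1 + m ^ 2 + (2 * β)⁻¹) := by
      have := mul_le_mul_of_nonneg_right step1 (le_of_lt hexpx)
      calc |∫ y : ℝ, heatKernelL0 α r x y * g y| * Real.exp (α * x ^ 2 / 4)
          ≤ M * Real.exp (2 * α * r) * Real.exp (-(α * x ^ 2 / 4)) * (1 + m ^ 2 + (2 * β)⁻¹) *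
            Real.exp (α * x ^ 2 / 4) := this
        _ = M * Real.exp (2 * α * r) * (1 + m ^ 2 + (2 * β)⁻¹) *
            (Real.exp (-(α * x ^ 2 / 4)) * Real.exp (α * x ^ 2 / 4)) := by ring
        _ = M * Real.exp (2 * α * r) * (1 + m ^ 2 + (2 * β)⁻¹) := by
            rw [← Real.exp_add, neg_add_cancel, Real.exp_zero, mul_one]
    exact le_trans step2 hfinal
  · rw [integral_undef hInt]
    simpa using hRHS
end

section
/- Let α > 0, r > 0 and let U₀(x,y) := 4π (1 − e^{−2αr})^{−1/2} √α · e^{2αr} · e^{−α(x − e^{−αr}y)²/(2(1 − e^{−2αr}))}. Then for n ∈ {0,1,2,3,4}, sup_x e^{α x²/2} ∫ ⟨x⟩^{−n} U₀(x,y) e^{−α y²/2} ⟨y⟩^{n} dy ≤ C_n e^{2αr} for a constant C_n depending only on n and α. -/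
open MeasureTheory

private lemma aux_sup (α : ℝ) (hα : 0 < α) (u : ℝ) :
    (1 + u ^ 2) ^ 2 * Real.exp (-(α * u ^ 2 / 4)) ≤ 2 + 128 / α ^ 2 := by
  have hs0 : 0 ≤ α * u ^ 2 / 4 := by positivity
  set s : ℝ := α * u ^ 2 / 4 with hs
  have hE0 : 0 < Real.exp (-s) := Real.exp_pos _
  have hE1 : Real.exp (-s) ≤ 1 := Real.exp_le_one_iff.mpr (by linarith)
  have hsq : Real.exp s = Real.exp (s / 2) ^ 2 := by
    rw [sq, ← Real.exp_add]; ring_nf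
  have h1 : s ^ 2 / 4 ≤ Real.exp s := by
    have h2 := Real.add_one_le_exp (s / 2)
    nlinarith [Real.exp_pos (s / 2)]
  have hmul : Real.exp (-s) * Real.exp s = 1 := by
    rw [← Real.exp_add]; simp
  have h3 : s ^ 2 * Real.exp (-s) ≤ 4 := by nlinarith
  have h4 : α ^ 2 * u ^ 4 * Real.exp (-s) = 16 * (s ^ 2 * Real.exp (-s)) := by
    rw [hs]; ring
  have hu4 : α ^ 2 * u ^ 4 * Real.exp (-s) ≤ 64 := by rw [h4]; linarith
  rw [show (2 : ℝ) + 128 / α ^ 2 = (2 * α ^ 2 + 128) / α ^ 2 by field_simp,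
    le_div_iff₀ (by positivity)]
  nlinarith [mul_nonneg (mul_nonneg (sq_nonneg (u ^ 2 - 1)) hE0.le) (sq_nonneg α),
    mul_le_of_le_one_right (sq_nonneg α) hE1]

private lemma aux_weight (ε x y : ℝ) (hε0 : 0 < ε) (hε1 : ε < 1) (n : ℕ) (hn : n ≤ 4) :
    Real.sqrt (1 + x ^ 2) ^ (-(n : ℝ)) * Real.sqrt (1 + y ^ 2) ^ (n : ℝ) ≤
      4 * (1 + (y - ε * x) ^ 2) ^ 2 := by
  set u : ℝ := y - ε * x with hu
  have hsx : (1 : ℝ) ≤ Real.sqrt (1 + x ^ 2) := by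
    have := Real.sqrt_le_sqrt (show (1 : ℝ) ≤ 1 + x ^ 2 by nlinarith)
    simpa using this
  have hsy : (0 : ℝ) ≤ Real.sqrt (1 + y ^ 2) := Real.sqrt_nonneg _
  have hsx0 : (0 : ℝ) < Real.sqrt (1 + x ^ 2) := by linarith
  rw [Real.rpow_neg hsx0.le, Real.rpow_natCast, Real.rpow_natCast]
  rw [inv_mul_eq_div, div_le_iff₀ (by positivity)]
  have hε2 : (0 : ℝ) ≤ 1 - ε ^ 2 := by nlinarith
  have hy2 : 1 + y ^ 2 ≤ 2 * (1 + u ^ 2) * (1 + x ^ 2) := by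
    rw [hu]
    nlinarith [sq_nonneg (y - 2 * (ε * x)), mul_nonneg (sq_nonneg x) hε2,
      mul_nonneg (sq_nonneg (y - ε * x)) (sq_nonneg x)]
  have hyb : Real.sqrt (1 + y ^ 2) ≤
      Real.sqrt 2 * Real.sqrt (1 + u ^ 2) * Real.sqrt (1 + x ^ 2) := by
    rw [← Real.sqrt_mul (by norm_num), ← Real.sqrt_mul (by positivity)]
    exact Real.sqrt_le_sqrt hy2
  have hB1 : (1 : ℝ) ≤ Real.sqrt 2 * Real.sqrt (1 + u ^ 2) := by
    have h2 : (1 : ℝ) ≤ Real.sqrt 2 := by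
      have := Real.sqrt_le_sqrt (by norm_num : (1:ℝ) ≤ 2)
      simpa using this
    have h3 : (1 : ℝ) ≤ Real.sqrt (1 + u ^ 2) := by
      have := Real.sqrt_le_sqrt (by nlinarith [sq_nonneg u] : (1:ℝ) ≤ 1 + u ^ 2)
      simpa using this
    nlinarith
  calc Real.sqrt (1 + y ^ 2) ^ n
      ≤ (Real.sqrt 2 * Real.sqrt (1 + u ^ 2) * Real.sqrt (1 + x ^ 2)) ^ n :=
        pow_le_pow_left₀ hsy hyb n
    _ = (Real.sqrt 2 * Real.sqrt (1 + u ^ 2)) ^ n * Real.sqrt (1 + x ^ 2) ^ n := mul_pow _ _ n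
    _ ≤ (Real.sqrt 2 * Real.sqrt (1 + u ^ 2)) ^ 4 * Real.sqrt (1 + x ^ 2) ^ n :=
        mul_le_mul_of_nonneg_right (pow_le_pow_right₀ hB1 hn) (pow_nonneg hsx0.le n)
    _ = 4 * (1 + u ^ 2) ^ 2 * Real.sqrt (1 + x ^ 2) ^ n := by
        have h2 : Real.sqrt 2 ^ 4 = 4 := by
          nlinarith [Real.sq_sqrt (by norm_num : (0:ℝ) ≤ 2)]
        have h3 : Real.sqrt (1 + u ^ 2) ^ 4 = (1 + u ^ 2) ^ 2 := by
          nlinarith [Real.sq_sqrt (by positivity : (0:ℝ) ≤ 1 + u ^ 2)]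
        rw [mul_pow, h2, h3]

private lemma aux_point (α ε δ : ℝ) (hα : 0 < α) (hε0 : 0 < ε) (hε1 : ε < 1)
    (hδeq : δ = 1 - ε ^ 2) (n : ℕ) (hn : n ≤ 4) (x y : ℝ) :
    Real.sqrt (1 + x ^ 2) ^ (-(n : ℝ)) * Real.sqrt (1 + y ^ 2) ^ (n : ℝ) *
      (Real.exp (α * x ^ 2 / 2) *
        Real.exp (-α * (x - ε * y) ^ 2 / (2 * δ)) * Real.exp (-α * y ^ 2 / 2)) ≤
    (4 * (2 + 128 / α ^ 2)) * Real.exp (-(α / (4 * δ)) * (y - ε * x) ^ 2) := by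
  have hδ0 : 0 < δ := by nlinarith
  have hδ1 : δ < 1 := by nlinarith
  set M : ℝ := 2 + 128 / α ^ 2 with hM
  set u : ℝ := y - ε * x with hu
  set b : ℝ := α / (4 * δ) with hb
  have hb0 : 0 < b := by positivity
  -- exponential identity
  have hexp : Real.exp (α * x ^ 2 / 2) *
      Real.exp (-α * (x - ε * y) ^ 2 / (2 * δ)) * Real.exp (-α * y ^ 2 / 2) =
      Real.exp (-(α / (2 * δ)) * u ^ 2) := by
    rw [← Real.exp_add, ← Real.exp_add]
    congr 1
    rw [hu, hδeq]
    have h2 : (1 : ℝ) - ε ^ 2 ≠ 0 := by nlinarith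
    field_simp
    ring
  have hw := aux_weight ε x y hε0 hε1 n hn
  have hg : (1 + u ^ 2) ^ 2 * Real.exp (-(α / (2 * δ)) * u ^ 2) ≤
      M * Real.exp (-b * u ^ 2) := by
    have hsplit : Real.exp (-(α / (2 * δ)) * u ^ 2) =
        Real.exp (-b * u ^ 2) * Real.exp (-b * u ^ 2) := by
      rw [← Real.exp_add]
      congr 1
      rw [hb]; field_simp; ring
    have hmono : Real.exp (-b * u ^ 2) ≤ Real.exp (-(α * u ^ 2 / 4)) := by
      apply Real.exp_le_exp.mpr
      have h1 : α / 4 ≤ b := by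
        rw [hb, div_le_div_iff₀ (by norm_num) (by positivity)]
        nlinarith
      nlinarith [sq_nonneg u]
    calc (1 + u ^ 2) ^ 2 * Real.exp (-(α / (2 * δ)) * u ^ 2)
        = ((1 + u ^ 2) ^ 2 * Real.exp (-b * u ^ 2)) * Real.exp (-b * u ^ 2) := by
          rw [hsplit]; ring
      _ ≤ ((1 + u ^ 2) ^ 2 * Real.exp (-(α * u ^ 2 / 4))) * Real.exp (-b * u ^ 2) :=
          mul_le_mul_of_nonneg_right
            (mul_le_mul_of_nonneg_left hmono (by positivity)) (Real.exp_nonneg _)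
      _ ≤ M * Real.exp (-b * u ^ 2) :=
          mul_le_mul_of_nonneg_right (aux_sup α hα u) (Real.exp_nonneg _)
  calc Real.sqrt (1 + x ^ 2) ^ (-(n : ℝ)) * Real.sqrt (1 + y ^ 2) ^ (n : ℝ) *
        (Real.exp (α * x ^ 2 / 2) * Real.exp (-α * (x - ε * y) ^ 2 / (2 * δ)) *
          Real.exp (-α * y ^ 2 / 2))
      = Real.sqrt (1 + x ^ 2) ^ (-(n : ℝ)) * Real.sqrt (1 + y ^ 2) ^ (n : ℝ) *
          Real.exp (-(α / (2 * δ)) * u ^ 2) := by rw [hexp]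
    _ ≤ (4 * (1 + u ^ 2) ^ 2) * Real.exp (-(α / (2 * δ)) * u ^ 2) :=
        mul_le_mul_of_nonneg_right hw (Real.exp_nonneg _)
    _ = 4 * ((1 + u ^ 2) ^ 2 * Real.exp (-(α / (2 * δ)) * u ^ 2)) := by ring
    _ ≤ 4 * (M * Real.exp (-b * u ^ 2)) :=
        mul_le_mul_of_nonneg_left hg (by norm_num)
    _ = (4 * M) * Real.exp (-b * u ^ 2) := by ring

/-- for the kernel
`U₀(x,y) = 4π (1-e^{-2αr})^{-1/2} √α e^{2αr} e^{-α(x - e^{-αr}y)²/(2(1-e^{-2αr}))}`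
and `n ∈ {0,…,4}`,
`sup_x e^{αx²/2} ∫ ⟨x⟩^{-n} U₀(x,y) e^{-αy²/2} ⟨y⟩^n dy ≤ C_n e^{2αr}` with
`C_n` depending only on `n` and `α`. -/
theorem kernel_weighted_bound (α : ℝ) (hα : 0 < α) (n : ℕ) (hn : n ≤ 4) :
    ∃ C > (0 : ℝ), ∀ r > (0 : ℝ), ∀ x : ℝ,
      Real.exp (α * x ^ 2 / 2) *
        (∫ y : ℝ, Real.sqrt (1 + x ^ 2) ^ (-(n : ℝ)) *
          (4 * Real.pi * (1 - Real.exp (-2 * α * r)) ^ (-(1 : ℝ) / 2) * Real.sqrt α *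
            Real.exp (2 * α * r) *
            Real.exp (-α * (x - Real.exp (-α * r) * y) ^ 2 /
              (2 * (1 - Real.exp (-2 * α * r))))) *
          Real.exp (-α * y ^ 2 / 2) * Real.sqrt (1 + y ^ 2) ^ (n : ℝ)) ≤
        C * Real.exp (2 * α * r) := by
  have hpi := Real.pi_gt_three
  set M : ℝ := 2 + 128 / α ^ 2 with hM
  have hM0 : 0 < M := by positivity
  refine ⟨32 * Real.pi ^ 2 * M, by positivity, ?_⟩
  intro r hr x
  have hε0 : 0 < Real.exp (-α * r) := Real.exp_pos _
  have hε1 : Real.exp (-α * r) < 1 := Real.exp_lt_one_iff.mpr (by nlinarith)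
  have hε2 : Real.exp (-2 * α * r) = Real.exp (-α * r) ^ 2 := by
    rw [sq, ← Real.exp_add]; ring_nf
  set ε : ℝ := Real.exp (-α * r) with hεdef
  have hδeq : 1 - Real.exp (-2 * α * r) = 1 - ε ^ 2 := by rw [hε2]
  have hδ0 : 0 < 1 - ε ^ 2 := by nlinarith
  set δ : ℝ := 1 - ε ^ 2 with hδdef
  set b : ℝ := α / (4 * δ) with hb
  have hb0 : 0 < b := by positivity
  set E2 : ℝ := Real.exp (2 * α * r) with hE2
  have hE20 : 0 < E2 := Real.exp_pos _
  set c1 : ℝ := 4 * Real.pi * δ ^ (-(1 : ℝ) / 2) * Real.sqrt α * E2 with hc1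
  have hδrp : δ ^ (-(1 : ℝ) / 2) = (Real.sqrt δ)⁻¹ := by
    rw [show (-(1 : ℝ) / 2) = -(1 / 2) by norm_num, Real.rpow_neg hδ0.le,
      ← Real.sqrt_eq_rpow]
  have hsδ : (0:ℝ) < Real.sqrt δ := Real.sqrt_pos.mpr hδ0
  have hc10 : 0 < c1 := by
    rw [hc1, hδrp]
    have hsα : (0:ℝ) < Real.sqrt α := Real.sqrt_pos.mpr hα
    positivity
  have hGint : Integrable (fun y : ℝ => c1 * ((4 * M) * Real.exp (-b * (y - ε * x) ^ 2))) :=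
    (((integrable_exp_neg_mul_sq hb0).comp_sub_right (ε * x)).const_mul (4 * M)).const_mul c1
  rw [← integral_const_mul, hδeq]
  have hle : (∫ y : ℝ, Real.exp (α * x ^ 2 / 2) *
      (Real.sqrt (1 + x ^ 2) ^ (-(n : ℝ)) *
        (4 * Real.pi * δ ^ (-(1 : ℝ) / 2) * Real.sqrt α * E2 *
          Real.exp (-α * (x - ε * y) ^ 2 / (2 * δ))) *
        Real.exp (-α * y ^ 2 / 2) * Real.sqrt (1 + y ^ 2) ^ (n : ℝ))) ≤
      ∫ y : ℝ, c1 * ((4 * M) * Real.exp (-b * (y - ε * x) ^ 2)) := by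
    apply integral_mono_of_nonneg _ hGint
    · filter_upwards with y
      have h := aux_point α ε δ hα hε0 hε1 hδdef n hn x y
      have hrw : Real.exp (α * x ^ 2 / 2) *
          (Real.sqrt (1 + x ^ 2) ^ (-(n : ℝ)) *
            (4 * Real.pi * δ ^ (-(1 : ℝ) / 2) * Real.sqrt α * E2 *
              Real.exp (-α * (x - ε * y) ^ 2 / (2 * δ))) *
            Real.exp (-α * y ^ 2 / 2) * Real.sqrt (1 + y ^ 2) ^ (n : ℝ)) =
          c1 * (Real.sqrt (1 + x ^ 2) ^ (-(n : ℝ)) * Real.sqrt (1 + y ^ 2) ^ (n : ℝ) *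
            (Real.exp (α * x ^ 2 / 2) *
              Real.exp (-α * (x - ε * y) ^ 2 / (2 * δ)) * Real.exp (-α * y ^ 2 / 2))) := by
        rw [hc1]; ring
      rw [hrw]
      have h' : (4 * M) * Real.exp (-(α / (4 * δ)) * (y - ε * x) ^ 2) =
          (4 * M) * Real.exp (-b * (y - ε * x) ^ 2) := by rw [hb]
      exact mul_le_mul_of_nonneg_left (h.trans_eq h') hc10.le
    · filter_upwards with y
      have hsx0 : (0:ℝ) < Real.sqrt (1 + x ^ 2) := Real.sqrt_pos.mpr (by positivity)
      have hsy0 : (0:ℝ) < Real.sqrt (1 + y ^ 2) := Real.sqrt_pos.mpr (by positivity)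
      have hδr : (0:ℝ) ≤ δ ^ (-(1 : ℝ) / 2) := by rw [hδrp]; positivity
      positivity
  refine hle.trans ?_
  have hint : (∫ y : ℝ, c1 * ((4 * M) * Real.exp (-b * (y - ε * x) ^ 2))) =
      c1 * ((4 * M) * Real.sqrt (Real.pi / b)) := by
    rw [integral_const_mul, integral_const_mul]
    congr 2
    calc (∫ y : ℝ, Real.exp (-b * (y - ε * x) ^ 2))
        = ∫ y : ℝ, Real.exp (-b * y ^ 2) :=
          integral_sub_right_eq_self (fun y => Real.exp (-b * y ^ 2)) (ε * x)
      _ = Real.sqrt (Real.pi / b) := integral_gaussian b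
  rw [hint]
  have hsα : (0:ℝ) < Real.sqrt α := Real.sqrt_pos.mpr hα
  have hS : Real.sqrt (Real.pi / b) * Real.sqrt α / Real.sqrt δ = 2 * Real.sqrt Real.pi := by
    rw [← Real.sqrt_mul (by positivity), ← Real.sqrt_div (by positivity)]
    have h5 : Real.pi / b * α / δ = 4 * Real.pi := by
      rw [hb]; field_simp
    rw [h5, show (4 : ℝ) * Real.pi = 2 ^ 2 * Real.pi by norm_num,
      Real.sqrt_mul (by positivity), Real.sqrt_sq (by norm_num)]
  have hrw2 : c1 * (4 * M * Real.sqrt (Real.pi / b)) =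
      16 * Real.pi * M * E2 * (Real.sqrt (Real.pi / b) * Real.sqrt α / Real.sqrt δ) := by
    rw [hc1, hδrp]
    field_simp
    ring
  rw [hrw2, hS]
  have hsπ : Real.sqrt Real.pi ≤ Real.pi := by
    nlinarith [Real.sq_sqrt Real.pi_nonneg, sq_nonneg (Real.sqrt Real.pi - 1)]
  calc 16 * Real.pi * M * E2 * (2 * Real.sqrt Real.pi)
      ≤ 16 * Real.pi * M * E2 * (2 * Real.pi) := by gcongr
    _ = 32 * Real.pi ^ 2 * M * E2 := by ring
end

section
/- Let c₁, c₂ > 0, b₀ > 0, p > 1, and β(τ) := (1/b₀ + (4p/(p−1)²)τ)^{−1}. Then there is a constant C = C(c₁, c₂, p) such that for all S > 0, ∫₀^S e^{−c₁(S−σ)} β(σ)^{c₂} dσ ≤ C β(S)^{c₂}. -/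
theorem exp_int_bound (k S : ℝ) (hk : 0 < k) :
    (∫ σ in (0:ℝ)..S, Real.exp (-k * (S - σ))) ≤ 1 / k := by
  have h : ∀ σ : ℝ, Real.exp (-k * (S - σ)) = Real.exp (-k*S) * Real.exp (k*σ) := by
    intro σ; rw [← Real.exp_add]; ring_nf
  have h2 : (∫ σ in (0:ℝ)..S, Real.exp (k*σ)) = k⁻¹ * (Real.exp (k*S) - 1) := by
    rw [intervalIntegral.integral_comp_mul_left (fun x => Real.exp x) hk.ne']
    simp [integral_exp, smul_eq_mul]
  have key : Real.exp (-k*S) * Real.exp (k*S) = 1 := by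
    rw [← Real.exp_add]; simp
  calc (∫ σ in (0:ℝ)..S, Real.exp (-k * (S - σ)))
      = Real.exp (-k*S) * ∫ σ in (0:ℝ)..S, Real.exp (k*σ) := by
        simp_rw [h]; rw [intervalIntegral.integral_const_mul]
    _ = k⁻¹ * (1 - Real.exp (-k*S)) := by rw [h2]; linear_combination k⁻¹ * key
    _ ≤ 1 / k := by
        rw [one_div]
        have h3 := (Real.exp_pos (-k*S)).le
        have := (inv_pos.mpr hk).le
        nlinarith

theorem one_add_le_aux (δ x : ℝ) (hδ : 0 < δ) (hδ1 : δ ≤ 1) (hx : 0 ≤ x) :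
    1 + x ≤ δ⁻¹ * Real.exp (δ * x) := by
  have h1 : δ * x + 1 ≤ Real.exp (δ * x) := Real.add_one_le_exp _
  have h2 : δ * (1 + x) ≤ δ * x + 1 := by nlinarith
  have h3 := inv_pos.mpr hδ
  calc 1 + x = δ⁻¹ * (δ * (1+x)) := by field_simp
    _ ≤ δ⁻¹ * Real.exp (δ * x) := mul_le_mul_of_nonneg_left (h2.trans h1) h3.le

/-- the exponentially decaying convolution reproduces the slow
decay of `β^{c₂}`:
`∫₀^S e^{-c₁(S-σ)} β(σ)^{c₂} dσ ≤ C β(S)^{c₂}` with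
`β(τ) = (1/b₀ + (4p/(p-1)²)τ)⁻¹`. -/
theorem convolution_beta_bound (p b₀ c₁ c₂ : ℝ) (hp : 1 < p) (hb₀ : 0 < b₀)
    (hc₁ : 0 < c₁) (hc₂ : 0 < c₂) :
    ∃ C > (0 : ℝ), ∀ S > (0 : ℝ),
      (∫ σ in (0 : ℝ)..S,
          Real.exp (-c₁ * (S - σ)) * ((1 / b₀ + 4 * p / (p - 1) ^ 2 * σ)⁻¹) ^ c₂) ≤
        C * ((1 / b₀ + 4 * p / (p - 1) ^ 2 * S)⁻¹) ^ c₂ := by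
  set a : ℝ := 4 * p / (p - 1) ^ 2 with ha_def
  have ha : 0 < a := div_pos (by linarith) (pow_pos (by linarith) 2)
  set δ : ℝ := min 1 (c₁ / (2 * c₂ * a * b₀)) with hδ_def
  have hden : 0 < 2 * c₂ * a * b₀ := mul_pos (mul_pos (by linarith) ha) hb₀
  have hδ : 0 < δ := lt_min one_pos (div_pos hc₁ hden)
  have hδ1 : δ ≤ 1 := min_le_left _ _
  have hδinv : 0 < δ⁻¹ := inv_pos.mpr hδ
  have hδc : δ * (c₂ * a * b₀) ≤ c₁ / 2 := by
    have h := min_le_right 1 (c₁ / (2 * c₂ * a * b₀))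
    have hpos : 0 < c₂ * a * b₀ := by
      exact mul_pos (mul_pos hc₂ ha) hb₀
    calc δ * (c₂ * a * b₀) ≤ (c₁ / (2 * c₂ * a * b₀)) * (c₂ * a * b₀) :=
          mul_le_mul_of_nonneg_right h hpos.le
      _ = c₁ / 2 := by field_simp
  refine ⟨(δ⁻¹) ^ c₂ * (2 / c₁), mul_pos (Real.rpow_pos_of_pos hδinv _) (by positivity), fun S hS => ?_⟩
  set v : ℝ := 1 / b₀ + a * S with hv_def
  have hv : 0 < v := add_pos (by positivity) (mul_pos ha hS)
  set K : ℝ := (δ⁻¹) ^ c₂ * (v⁻¹) ^ c₂ with hK_def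
  have hvinv : (0:ℝ) ≤ (v⁻¹) ^ c₂ := Real.rpow_nonneg (inv_nonneg.mpr hv.le) _
  have hK : 0 ≤ K := mul_nonneg (Real.rpow_nonneg hδinv.le _) hvinv
  -- pointwise bound
  have hpt : ∀ σ ∈ Set.Icc (0:ℝ) S,
      Real.exp (-c₁ * (S - σ)) * ((1 / b₀ + a * σ)⁻¹) ^ c₂
        ≤ K * Real.exp (-(c₁/2) * (S - σ)) := by
    intro σ hσ
    obtain ⟨hσ0, hσS⟩ := hσ
    set u : ℝ := 1 / b₀ + a * σ with hu_def
    have hu : 0 < u := add_pos_of_pos_of_nonneg (by positivity) (mul_nonneg ha.le hσ0)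
    set t : ℝ := S - σ with ht_def
    have ht : 0 ≤ t := by simp only [ht_def]; linarith
    have hx : 0 ≤ a * b₀ * t := mul_nonneg (mul_nonneg ha.le hb₀.le) ht
    have step1 : u⁻¹ ≤ (1 + a * b₀ * t) * v⁻¹ := by
      rw [inv_eq_one_div, inv_eq_one_div, mul_one_div, div_le_div_iff₀ hu hv]
      have hub : 1 / b₀ ≤ u := by
        simp only [hu_def]; nlinarith
      have h5 : a * b₀ * t * (1/b₀) ≤ a * b₀ * t * u := mul_le_mul_of_nonneg_left hub hx
      have h6 : a * b₀ * t * (1/b₀) = a * t := by field_simp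
      have h7 : a * t ≤ a * b₀ * t * u := by rw [← h6]; exact h5
      have hvu : v = u + a * t := by simp only [hv_def, hu_def, ht_def]; ring
      have h8 : (1 + a * b₀ * t) * u = u + a * b₀ * t * u := by ring
      linarith [h7, hvu, h8]
    have step2 : (u⁻¹) ^ c₂ ≤ (1 + a * b₀ * t) ^ c₂ * (v⁻¹) ^ c₂ := by
      rw [← Real.mul_rpow (by linarith) (inv_nonneg.mpr hv.le)]
      exact Real.rpow_le_rpow (inv_nonneg.mpr hu.le) step1 hc₂.le
    have step3 : (1 + a * b₀ * t) ^ c₂ ≤ (δ⁻¹) ^ c₂ * Real.exp ((c₁/2) * t) := by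
      have h1 : 1 + a * b₀ * t ≤ δ⁻¹ * Real.exp (δ * (a * b₀ * t)) :=
        one_add_le_aux δ _ hδ hδ1 hx
      calc (1 + a * b₀ * t) ^ c₂ ≤ (δ⁻¹ * Real.exp (δ * (a * b₀ * t))) ^ c₂ :=
            Real.rpow_le_rpow (by linarith) h1 hc₂.le
        _ = (δ⁻¹) ^ c₂ * Real.exp (δ * (a * b₀ * t) * c₂) := by
            rw [Real.mul_rpow hδinv.le (Real.exp_pos _).le, ← Real.exp_mul]
        _ ≤ (δ⁻¹) ^ c₂ * Real.exp ((c₁/2) * t) := by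
            apply mul_le_mul_of_nonneg_left _ (Real.rpow_nonneg hδinv.le _)
            apply Real.exp_le_exp.mpr
            have heq : δ * (a * b₀ * t) * c₂ = (δ * (c₂ * a * b₀)) * t := by ring
            rw [heq]
            exact mul_le_mul_of_nonneg_right hδc ht
    have hexp : Real.exp (-c₁ * t) * Real.exp ((c₁/2) * t) = Real.exp (-(c₁/2) * t) := by
      rw [← Real.exp_add]; ring_nf
    calc Real.exp (-c₁ * t) * (u⁻¹) ^ c₂
        ≤ Real.exp (-c₁ * t) * ((1 + a * b₀ * t) ^ c₂ * (v⁻¹) ^ c₂) :=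
          mul_le_mul_of_nonneg_left step2 (Real.exp_pos _).le
      _ ≤ Real.exp (-c₁ * t) * (((δ⁻¹) ^ c₂ * Real.exp ((c₁/2) * t)) * (v⁻¹) ^ c₂) :=
          mul_le_mul_of_nonneg_left
            (mul_le_mul_of_nonneg_right step3 hvinv) (Real.exp_pos _).le
      _ = K * Real.exp (-(c₁/2) * t) := by
          rw [hK_def]
          have : Real.exp (-c₁ * t) * (((δ⁻¹) ^ c₂ * Real.exp ((c₁/2) * t)) * (v⁻¹) ^ c₂)
              = ((δ⁻¹) ^ c₂ * (v⁻¹) ^ c₂) * (Real.exp (-c₁ * t) * Real.exp ((c₁/2) * t)) := by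
            ring
          rw [this, hexp]
  -- integrability
  have huIcc : Set.uIcc (0:ℝ) S = Set.Icc 0 S := Set.uIcc_of_le hS.le
  have hf : IntervalIntegrable
      (fun σ => Real.exp (-c₁ * (S - σ)) * ((1 / b₀ + a * σ)⁻¹) ^ c₂)
      MeasureTheory.volume 0 S := by
    apply ContinuousOn.intervalIntegrable
    apply ContinuousOn.mul
    · exact (Real.continuous_exp.comp (continuous_const.mul (continuous_const.sub continuous_id))).continuousOn
    · apply ContinuousOn.rpow_const
      · apply ContinuousOn.inv₀
        · exact (continuous_const.add (continuous_const.mul continuous_id)).continuousOn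
        · intro x hx
          rw [huIcc] at hx
          have : 0 < 1 / b₀ + a * x :=
            add_pos_of_pos_of_nonneg (by positivity) (mul_nonneg ha.le hx.1)
          exact this.ne'
      · intro x _; exact Or.inr hc₂.le
  have hg : IntervalIntegrable
      (fun σ => K * Real.exp (-(c₁/2) * (S - σ))) MeasureTheory.volume 0 S := by
    apply Continuous.intervalIntegrable
    exact continuous_const.mul (Real.continuous_exp.comp (continuous_const.mul (continuous_const.sub continuous_id)))
  calc (∫ σ in (0:ℝ)..S, Real.exp (-c₁ * (S - σ)) * ((1 / b₀ + a * σ)⁻¹) ^ c₂)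
      ≤ ∫ σ in (0:ℝ)..S, K * Real.exp (-(c₁/2) * (S - σ)) :=
        intervalIntegral.integral_mono_on hS.le hf hg hpt
    _ = K * ∫ σ in (0:ℝ)..S, Real.exp (-(c₁/2) * (S - σ)) :=
        intervalIntegral.integral_const_mul _ _
    _ ≤ K * (1 / (c₁/2)) :=
        mul_le_mul_of_nonneg_left (exp_int_bound (c₁/2) S (half_pos hc₁)) hK
    _ = (δ⁻¹) ^ c₂ * (2 / c₁) * (v⁻¹) ^ c₂ := by
        rw [hK_def]
        have : (1:ℝ) / (c₁/2) = 2 / c₁ := by field_simp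
        rw [this]; ring
end
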